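/- Let D and E be real M×N matrices with M ≥ 1, let the columns of D be linearly independent (v ↦ D·v injective), set D⁺ = (DᵀD)⁻¹·Dᵀ, and let F ∈ ℝ^M. If u_h ∈ ℝ^N minimizes v ↦ ‖D·v − F‖₂, then for every û ∈ ℝ^N: ‖E·u_h − E·û‖_{ℓ2} ≤ (1/√M)·‖E‖₂·‖D⁺‖₂·‖F − D·û‖₂, where ‖E‖₂ and ‖D⁺‖₂ are the operator norms induced by the Euclidean vector norms. -/

import Mathlib

open Matrix Finset

/-- The operator (spectral) norm of a real rectangular matrix, induced by the
Euclidean vector norms: `‖A‖₂ = sup_{x ≠ 0} ‖A·x‖₂ / ‖x‖₂`. -/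
noncomputable def matSpectralNorm {M N : ℕ} (A : Matrix (Fin M) (Fin N) ℝ) : ℝ :=
  ‖(Matrix.toEuclideanLin A).toContinuousLinearMap‖

lemma sqrt_sum_eq_norm {M : ℕ} (x : Fin M → ℝ) :
    Real.sqrt (∑ i, x i ^ 2) = ‖(WithLp.equiv 2 (Fin M → ℝ)).symm x‖ := by
  rw [EuclideanSpace.norm_eq]
  congr 1
  refine Finset.sum_congr rfl fun i _ => ?_
  rw [Real.norm_eq_abs, sq_abs]
  rfl

lemma spectralNorm_bound {M N : ℕ} (A : Matrix (Fin M) (Fin N) ℝ) (x : Fin N → ℝ) :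
    Real.sqrt (∑ i, (A.mulVec x) i ^ 2) ≤ matSpectralNorm A * Real.sqrt (∑ i, x i ^ 2) := by
  rw [sqrt_sum_eq_norm, sqrt_sum_eq_norm]
  have h := (Matrix.toEuclideanLin A).toContinuousLinearMap.le_opNorm
    ((WithLp.equiv 2 (Fin N → ℝ)).symm x)
  rw [LinearMap.coe_toContinuousLinearMap'] at h
  exact h

/-- **Stability estimate for the least-squares PDE solution.**
If the columns of `D` are independent and `u_h` minimizes `v ↦ ‖D·v − F‖₂`, then
for every `û`:
`‖E·u_h − E·û‖_{ℓ2} ≤ (1/√M)·‖E‖₂·‖D⁺‖₂·‖F − D·û‖₂`,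
where `‖e‖_{ℓ2} = (1/√M)‖e‖₂` and `‖·‖₂` on matrices is the operator norm
induced by the Euclidean vector norms. -/
theorem lsq_stability_estimate
    (M N : ℕ) (hM : 1 ≤ M) (D E : Matrix (Fin M) (Fin N) ℝ)
    (F : Fin M → ℝ) (uh : Fin N → ℝ)
    (hinj : Function.Injective D.mulVec)
    (hmin : ∀ v : Fin N → ℝ,
      Real.sqrt (∑ i, (D.mulVec uh - F) i ^ 2) ≤
        Real.sqrt (∑ i, (D.mulVec v - F) i ^ 2)) :
    ∀ uhat : Fin N → ℝ,
      (1 / Real.sqrt M) * Real.sqrt (∑ i, (E.mulVec uh - E.mulVec uhat) i ^ 2) ≤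
        (1 / Real.sqrt M) * matSpectralNorm E * matSpectralNorm ((Dᵀ * D)⁻¹ * Dᵀ) *
          Real.sqrt (∑ i, (F - D.mulVec uhat) i ^ 2) := by
  intro uhat
  -- squared minimality
  have hmin2 : ∀ v : Fin N → ℝ,
      (∑ i, (D.mulVec uh - F) i ^ 2) ≤ (∑ i, (D.mulVec v - F) i ^ 2) := by
    intro v
    have h := hmin v
    have h1 : (0:ℝ) ≤ ∑ i, (D.mulVec uh - F) i ^ 2 :=
      Finset.sum_nonneg fun i _ => sq_nonneg _
    have h2 : (0:ℝ) ≤ ∑ i, (D.mulVec v - F) i ^ 2 :=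
      Finset.sum_nonneg fun i _ => sq_nonneg _
    nlinarith [Real.sq_sqrt h1, Real.sq_sqrt h2, Real.sqrt_nonneg (∑ i, (D.mulVec uh - F) i ^ 2), Real.sqrt_nonneg (∑ i, (D.mulVec v - F) i ^ 2)]
  set r : Fin M → ℝ := D.mulVec uh - F with hr
  -- orthogonality: ∑ r i * (D w) i = 0
  have horth : ∀ w : Fin N → ℝ, ∑ i, r i * (D.mulVec w) i = 0 := by
    intro w
    set a : ℝ := ∑ i, r i * (D.mulVec w) i with ha
    set b : ℝ := ∑ i, (D.mulVec w) i ^ 2 with hb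
    have hbnn : 0 ≤ b := Finset.sum_nonneg fun i _ => sq_nonneg _
    have key : ∀ t : ℝ, 0 ≤ 2 * t * a + t ^ 2 * b := by
      intro t
      have h := hmin2 (uh + t • w)
      have hexp : ∑ i, (D.mulVec (uh + t • w) - F) i ^ 2
          = (∑ i, r i ^ 2) + (2 * t * a + t ^ 2 * b) := by
        have hcoord : ∀ i, (D.mulVec (uh + t • w) - F) i = r i + t * (D.mulVec w) i := by
          intro i
          simp [Matrix.mulVec_add, Matrix.mulVec_smul, hr]
          ring
        simp only [hcoord, ha, hb, Finset.mul_sum, ← Finset.sum_add_distrib]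
        exact Finset.sum_congr rfl fun i _ => by ring
      linarith [h, hexp ▸ h]
    by_contra hne
    have h := key (-a / (b + 1))
    have hb1 : (0:ℝ) < b + 1 := by linarith
    have : 2 * (-a / (b + 1)) * a + (-a / (b + 1)) ^ 2 * b
        = a ^ 2 * (-(b + 2)) / (b + 1) ^ 2 := by field_simp; ring
    rw [this] at h
    have ha2 : 0 < a ^ 2 := by positivity
    have hneg : a ^ 2 * (-(b + 2)) / (b + 1) ^ 2 < 0 :=
      div_neg_of_neg_of_pos (by nlinarith) (by positivity)
    linarith
  -- Pythagoras: ∑ (D(uh - uhat)) i ^2 ≤ ∑ (F - D uhat) i ^2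
  set w : Fin N → ℝ := uh - uhat with hw
  have hdecomp : ∀ i, (F - D.mulVec uhat) i = -(r i) + (D.mulVec w) i := by
    intro i
    simp only [hr, hw, Matrix.mulVec_sub, Pi.sub_apply, Pi.neg_apply]
    ring
  have hpyth : ∑ i, (D.mulVec w) i ^ 2 ≤ ∑ i, (F - D.mulVec uhat) i ^ 2 := by
    have : ∑ i, (F - D.mulVec uhat) i ^ 2
        = ∑ i, r i ^ 2 + ∑ i, (D.mulVec w) i ^ 2 - 2 * ∑ i, r i * (D.mulVec w) i := by
      simp only [hdecomp]
      rw [Finset.mul_sum]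
      rw [← Finset.sum_add_distrib, ← Finset.sum_sub_distrib]
      refine Finset.sum_congr rfl fun i _ => by ring
    rw [this, horth w]
    have : (0:ℝ) ≤ ∑ i, r i ^ 2 := Finset.sum_nonneg fun i _ => sq_nonneg _
    linarith
  -- invertibility of DᵀD
  have hdet : IsUnit (Dᵀ * D).det := by
    by_contra hd
    rw [isUnit_iff_ne_zero, not_ne_iff] at hd
    obtain ⟨v, hv0, hv⟩ := (Matrix.exists_mulVec_eq_zero_iff).2 hd
    have : D.mulVec v = 0 := by
      have h1 : v ⬝ᵥ ((Dᵀ * D).mulVec v) = 0 := by rw [hv]; simp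
      have h2 : v ⬝ᵥ ((Dᵀ * D).mulVec v) = (D.mulVec v) ⬝ᵥ (D.mulVec v) := by
        rw [← Matrix.mulVec_mulVec, Matrix.dotProduct_mulVec v Dᵀ, Matrix.vecMul_transpose]
      have h3 : (D.mulVec v) ⬝ᵥ (D.mulVec v) = 0 := by rw [← h2, h1]
      by_contra hnz
      have hpos : 0 < (D.mulVec v) ⬝ᵥ (D.mulVec v) := by
        rw [dotProduct]
        obtain ⟨j, hj⟩ : ∃ j, D.mulVec v j ≠ 0 := by
          by_contra hall
          push_neg at hall
          exact hnz (funext hall)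
        exact Finset.sum_pos' (fun i _ => mul_self_nonneg _)
          ⟨j, Finset.mem_univ j, mul_self_pos.2 hj⟩
      linarith [h3]
    exact hv0 (hinj (by simpa [Matrix.mulVec_zero] using this))
  -- key identity
  have hDpD : ((Dᵀ * D)⁻¹ * Dᵀ * D) = 1 := by
    rw [Matrix.mul_assoc, Matrix.nonsing_inv_mul _ hdet]
  have hkey : E.mulVec uh - E.mulVec uhat
      = (E * ((Dᵀ * D)⁻¹ * Dᵀ)).mulVec (D.mulVec w) := by
    rw [Matrix.mulVec_mulVec, Matrix.mul_assoc, hDpD, Matrix.mul_one, ← Matrix.mulVec_sub, hw]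
  rw [hkey]
  have h1 := spectralNorm_bound (E * ((Dᵀ * D)⁻¹ * Dᵀ)) (D.mulVec w)
  -- spectralNorm (A*B) ≤ matSpectralNorm A * matSpectralNorm B
  have hsub : matSpectralNorm (E * ((Dᵀ * D)⁻¹ * Dᵀ)) ≤
      matSpectralNorm E * matSpectralNorm ((Dᵀ * D)⁻¹ * Dᵀ) := by
    unfold matSpectralNorm
    have : Matrix.toEuclideanLin (E * ((Dᵀ * D)⁻¹ * Dᵀ))
        = (Matrix.toEuclideanLin E).comp (Matrix.toEuclideanLin ((Dᵀ * D)⁻¹ * Dᵀ)) := by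
      simp only [Matrix.toEuclideanLin_eq_toLin]
      exact Matrix.toLin_mul _ _ _ E ((Dᵀ * D)⁻¹ * Dᵀ)
    rw [this]
    refine ContinuousLinearMap.opNorm_le_bound _ (by positivity) fun x => ?_
    rw [LinearMap.coe_toContinuousLinearMap', LinearMap.comp_apply]
    calc ‖Matrix.toEuclideanLin E (Matrix.toEuclideanLin ((Dᵀ * D)⁻¹ * Dᵀ) x)‖
        ≤ ‖(Matrix.toEuclideanLin E).toContinuousLinearMap‖ *
          ‖Matrix.toEuclideanLin ((Dᵀ * D)⁻¹ * Dᵀ) x‖ := by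
          have h := (Matrix.toEuclideanLin E).toContinuousLinearMap.le_opNorm
            (Matrix.toEuclideanLin ((Dᵀ * D)⁻¹ * Dᵀ) x)
          rwa [LinearMap.coe_toContinuousLinearMap'] at h
      _ ≤ ‖(Matrix.toEuclideanLin E).toContinuousLinearMap‖ *
          (‖(Matrix.toEuclideanLin ((Dᵀ * D)⁻¹ * Dᵀ)).toContinuousLinearMap‖ * ‖x‖) := by
          refine mul_le_mul_of_nonneg_left ?_ (norm_nonneg _)
          have h := (Matrix.toEuclideanLin ((Dᵀ * D)⁻¹ * Dᵀ)).toContinuousLinearMap.le_opNorm x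
          rwa [LinearMap.coe_toContinuousLinearMap'] at h
      _ = _ := by ring
  have hE : 0 ≤ matSpectralNorm E := norm_nonneg _
  have hDp : 0 ≤ matSpectralNorm ((Dᵀ * D)⁻¹ * Dᵀ) := norm_nonneg _
  have hDw : Real.sqrt (∑ i, (D.mulVec w) i ^ 2) ≤ Real.sqrt (∑ i, (F - D.mulVec uhat) i ^ 2) :=
    Real.sqrt_le_sqrt hpyth
  have hm : (0:ℝ) ≤ 1 / Real.sqrt M := by positivity
  have hfinal : Real.sqrt (∑ i, ((E * ((Dᵀ * D)⁻¹ * Dᵀ)).mulVec (D.mulVec w)) i ^ 2)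
      ≤ matSpectralNorm E * matSpectralNorm ((Dᵀ * D)⁻¹ * Dᵀ) *
        Real.sqrt (∑ i, (F - D.mulVec uhat) i ^ 2) := by
    calc _ ≤ matSpectralNorm (E * ((Dᵀ * D)⁻¹ * Dᵀ)) * Real.sqrt (∑ i, (D.mulVec w) i ^ 2) := h1
    _ ≤ matSpectralNorm E * matSpectralNorm ((Dᵀ * D)⁻¹ * Dᵀ) *
        Real.sqrt (∑ i, (F - D.mulVec uhat) i ^ 2) := by
      apply mul_le_mul hsub hDw (Real.sqrt_nonneg _) (by positivity)
  calc (1 / Real.sqrt M) * Real.sqrt (∑ i, ((E * ((Dᵀ * D)⁻¹ * Dᵀ)).mulVec (D.mulVec w)) i ^ 2)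
      ≤ (1 / Real.sqrt M) * (matSpectralNorm E * matSpectralNorm ((Dᵀ * D)⁻¹ * Dᵀ) *
        Real.sqrt (∑ i, (F - D.mulVec uhat) i ^ 2)) := by
        exact mul_le_mul_of_nonneg_left hfinal hm
    _ = _ := by ring
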